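/- Let G be a strongly connected semi-complete directed graph on n ≥ 4 vertices. Then there exist two distinct vertices i and j such that both induced subgraphs G(i) and G(j), obtained from G by deleting vertex i (respectively j) together with all incident edges, are strongly connected. -/

import Mathlib

/-- A digraph (edge relation) is semi-complete if between any two distinct vertices there is
an edge in at least one direction. -/
def SemiComplete {V : Type*} (r : V → V → Prop) : Prop :=
  ∀ i j : V, i ≠ j → (r i j ∨ r j i)

/-- A digraph is strongly connected if for every pair of distinct vertices there is a
directed path from one to the other. -/
def StronglyConnected {V : Type*} (r : V → V → Prop) : Prop :=
  ∀ i j : V, i ≠ j → Relation.ReflTransGen r i j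

/-- The subgraph of `r` induced by deleting vertex `i` (restriction of `r` to the remaining
vertices). -/
def delGraph {V : Type*} (r : V → V → Prop) (i : V) :
    {x : V // x ≠ i} → {x : V // x ≠ i} → Prop :=
  fun a b => r a.1 b.1

namespace TwoDel

variable {V : Type*} {r : V → V → Prop}

lemma chain_cons_iff {x c : V} {m : List V} :
    List.Chain r x (c :: m) ↔ r x c ∧ List.Chain r c m := List.isChain_cons_cons

lemma chain_split_iff {a c : V} {l₁ l₂ : List V} :
    List.Chain r a (l₁ ++ c :: l₂) ↔ List.Chain r a (l₁ ++ [c]) ∧ List.Chain r c l₂ :=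
  List.isChain_cons_split

lemma chain_map_iff {W : Type*} {s : V → V → Prop} (f : W → V) {b : W} {l : List W} :
    List.Chain s (f b) (l.map f) ↔ List.Chain (fun a b => s (f a) (f b)) b l :=
  List.isChain_cons_map f

/-- A cycle anchored at `v`: the list `v :: l` of distinct vertices with edges along it and
a wrap-around edge from the last element back to `v`. -/
def IsCyc (r : V → V → Prop) (v : V) (l : List V) : Prop :=
  (v :: l).Nodup ∧ List.Chain r v (l ++ [v])

lemma reach_closed {S : Set V} (hS : ∀ x ∈ S, ∀ y, r x y → y ∈ S) {x y : V}
    (hx : x ∈ S) (h : Relation.ReflTransGen r x y) : y ∈ S := by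
  induction h with
  | refl => exact hx
  | tail _ hab ih => exact hS _ ih _ hab

lemma chain_concat {x y : V} (m : List V) :
    List.Chain r x (m ++ [y]) ↔ List.Chain r x m ∧ r ((x :: m).getLast (by simp)) y := by
  induction m generalizing x with
  | nil => simp [chain_cons_iff, List.Chain.nil]
  | cons c m ih =>
    have hgl : (x :: c :: m).getLast (by simp) = (c :: m).getLast (by simp) :=
      List.getLast_cons (by simp)
    simp only [List.cons_append, chain_cons_iff, ih, hgl]
    tauto

lemma chain_reach {x : V} {m : List V} (h : List.Chain r x m) :
    ∀ y ∈ m, Relation.ReflTransGen r x y := by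
  induction m generalizing x with
  | nil => simp
  | cons c m ih =>
    rw [chain_cons_iff] at h
    intro y hy
    rcases List.mem_cons.1 hy with rfl | hy
    · exact Relation.ReflTransGen.single h.1
    · exact Relation.ReflTransGen.head h.1 (ih h.2 y hy)

lemma perm_rot {v w : V} (l1 l2 : List V) :
    (w :: (l2 ++ v :: l1)).Perm (v :: (l1 ++ w :: l2)) := by
  have h : ((w :: l2) ++ (v :: l1)).Perm ((v :: l1) ++ (w :: l2)) := List.perm_append_comm
  simpa using h

lemma rotate {v w : V} {l : List V} (hc : IsCyc r v l) (hw : w ∈ v :: l) :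
    ∃ l', IsCyc r w l' ∧ (w :: l').Perm (v :: l) := by
  rcases List.mem_cons.1 hw with rfl | hw
  · exact ⟨l, hc, List.Perm.refl _⟩
  · obtain ⟨l1, l2, rfl⟩ := List.append_of_mem hw
    refine ⟨l2 ++ v :: l1, ⟨(perm_rot l1 l2).symm.nodup hc.1, ?_⟩, perm_rot l1 l2⟩
    have h2 := hc.2
    rw [List.append_assoc, List.cons_append, chain_split_iff] at h2
    rw [List.append_assoc, List.cons_append, chain_split_iff]
    exact ⟨h2.2, h2.1⟩

lemma insert_aux (hsemi : SemiComplete r) {w : V} :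
    ∀ (m : List V) (x : V), List.Chain r x m → r x w → w ∉ m → (∃ b ∈ m, r w b) →
      ∃ m1 b m2, m = m1 ++ b :: m2 ∧ List.Chain r x (m1 ++ w :: b :: m2) := by
  intro m
  induction m with
  | nil => simp
  | cons c m ih =>
    intro x hch hxw hwm hb
    rw [chain_cons_iff] at hch
    by_cases hwc : r w c
    · exact ⟨[], c, m, rfl, by simp [chain_cons_iff, hxw, hwc, hch.2]⟩
    · have hcw : r c w := by
        rcases hsemi c w (fun h => hwm (by simp [h])) with h | h
        · exact h
        · exact absurd h hwc
      obtain ⟨b, hbm, hwb⟩ := hb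
      have hbm' : b ∈ m := by
        rcases List.mem_cons.1 hbm with rfl | h
        · exact absurd hwb hwc
        · exact h
      obtain ⟨m1, b', m2, heq, hch'⟩ := ih c hch.2 hcw (fun h => hwm (by simp [h])) ⟨b, hbm', hwb⟩
      exact ⟨c :: m1, b', m2, by simp [heq], by simp [chain_cons_iff, hch.1, hch']⟩

lemma insert (hsemi : SemiComplete r) {v w : V} {l : List V} (hc : IsCyc r v l)
    (hw : w ∉ v :: l) (ha : ∃ a ∈ v :: l, r a w) (hb : ∃ b ∈ v :: l, r w b) :
    ∃ l', IsCyc r v l' ∧ (v :: l').Perm (w :: v :: l) := by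
  obtain ⟨a, haC, haw⟩ := ha
  obtain ⟨la, hca, hpa⟩ := rotate hc haC
  have hwa : w ∉ a :: la := fun h => hw (hpa.mem_iff.1 h)
  have hbm : ∃ b ∈ la ++ [a], r w b := by
    obtain ⟨b, hbC, hwb⟩ := hb
    have : b ∈ a :: la := hpa.mem_iff.2 hbC
    rcases List.mem_cons.1 this with rfl | h
    · exact ⟨b, by simp, hwb⟩
    · exact ⟨b, by simp [h], hwb⟩
  have hwm : w ∉ la ++ [a] := by
    intro h
    rcases List.mem_append.1 h with h | h
    · exact hwa (by simp [h])
    · exact hwa (by simp at h; simp [h])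
  obtain ⟨m1, b', m2, heq, hch⟩ := insert_aux hsemi (la ++ [a]) a hca.2 haw hwm hbm
  set M := m1 ++ w :: b' :: m2 with hM
  have hlast1 : (b' :: m2).getLast? = some a := by
    have h1 : (m1 ++ b' :: m2).getLast? = some a := by
      rw [← heq]; exact List.getLast?_concat
    rw [List.getLast?_append] at h1
    obtain ⟨x, hx⟩ : ∃ x, (b' :: m2).getLast? = some x := by
      rcases m2.eq_nil_or_concat with rfl | ⟨m2', c, rfl⟩
      · exact ⟨b', rfl⟩
      · refine ⟨c, ?_⟩
        rw [show b' :: m2'.concat c = (b' :: m2') ++ [c] by simp [List.concat_eq_append]]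
        exact List.getLast?_concat
    rw [hx] at h1 ⊢
    simpa using h1
  have hlastM : M.getLast? = some a := by
    rw [hM, show m1 ++ w :: b' :: m2 = (m1 ++ [w]) ++ b' :: m2 by simp,
      List.getLast?_append, hlast1]
    rfl
  have hMeq : M.dropLast ++ [a] = M := List.dropLast_append_getLast? a hlastM
  have hperm2 : (a :: M.dropLast).Perm (w :: a :: la) := by
    have hP : ((a :: M.dropLast) ++ [a]).Perm ((w :: a :: la) ++ [a]) := by
      rw [List.cons_append, hMeq, hM]
      have key2 : (w :: a :: la) ++ [a] = w :: a :: (la ++ [a]) := by simp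
      rw [key2, heq]
      have p1 : (m1 ++ w :: (b' :: m2)).Perm (w :: (m1 ++ b' :: m2)) := List.perm_middle
      exact (p1.cons a).trans (List.Perm.swap w a (m1 ++ b' :: m2))
    exact (List.perm_append_right_iff _).1 hP
  have hcyc2 : IsCyc r a M.dropLast := by
    refine ⟨hperm2.symm.nodup ?_, ?_⟩
    · exact List.nodup_cons.2 ⟨hwa, hca.1⟩
    · rw [hMeq]; exact hch
  have hv1 : v ∈ a :: la := hpa.mem_iff.2 ((List.mem_cons_self (a := v) (l := l)))
  have hvmem : v ∈ a :: M.dropLast := hperm2.mem_iff.2 (List.mem_cons.2 (Or.inr hv1))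
  obtain ⟨l', hc', hp'⟩ := rotate hcyc2 hvmem
  exact ⟨l', hc', hp'.trans (hperm2.trans ((hpa).cons w))⟩

lemma grow (hsemi : SemiComplete r) (hsc : StronglyConnected r)
    {v : V} {l : List V} (hc : IsCyc r v l) (hl : l ≠ [])
    (hex : ∃ w, w ∉ v :: l) :
    ∃ l', IsCyc r v l' ∧ l'.length = l.length + 1 := by
  classical
  by_cases hcase : ∃ w, w ∉ v :: l ∧ (∃ a ∈ v :: l, r a w) ∧ (∃ b ∈ v :: l, r w b)
  · obtain ⟨w, hw, ha, hb⟩ := hcase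
    obtain ⟨l', hc', hp⟩ := insert hsemi hc hw ha hb
    refine ⟨l', hc', ?_⟩
    have := hp.length_eq
    simpa using this
  · push_neg at hcase
    -- every outside vertex is type A (no edges C → w) or type B (no edges w → C)
    have hAB : ∀ w, w ∉ v :: l → (∀ a ∈ v :: l, ¬ r a w) ∨ (∀ b ∈ v :: l, ¬ r w b) := by
      intro w hw
      by_cases hA : ∀ a ∈ v :: l, ¬ r a w
      · exact Or.inl hA
      · push_neg at hA
        refine Or.inr fun b hb hrb => ?_
        exact hcase w hw hA b hb hrb
    set C := v :: l with hC
    -- existence of a type-A vertex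
    obtain ⟨w0, hw0⟩ := hex
    have hAne : ∃ a1, a1 ∉ C ∧ ∀ c ∈ C, ¬ r c a1 := by
      by_contra hno
      push_neg at hno
      have hclosed : ∀ x ∈ {x : V | x ∉ C}, ∀ y, r x y → y ∈ {x : V | x ∉ C} := by
        intro x hx y hxy
        simp only [Set.mem_setOf_eq] at hx ⊢
        intro hyC
        obtain ⟨c, hcC, hcx⟩ := hno x hx
        rcases hAB x hx with hA | hB
        · exact hA c hcC hcx
        · exact hB y hyC hxy
      have hvw0 : w0 ≠ v := fun h => hw0 (h ▸ (List.mem_cons_self (a := v) (l := l)))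
      have := reach_closed hclosed (x := w0) (y := v) hw0 (hsc w0 v hvw0)
      exact this ((List.mem_cons_self (a := v) (l := l)))
    obtain ⟨a1, ha1C, ha1A⟩ := hAne
    -- existence of an edge from a type-B vertex into a type-A vertex
    have hedge : ∃ b0 a0, b0 ∉ C ∧ a0 ∉ C ∧ (∀ c ∈ C, ¬ r c a0) ∧ r b0 a0 ∧
        ¬ (∀ c ∈ C, ¬ r c b0) := by
      by_contra hno
      push_neg at hno
      set S : Set V := {x | x ∈ C ∨ (x ∉ C ∧ ¬ (∀ c ∈ C, ¬ r c x))} with hS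
      have hclosed : ∀ x ∈ S, ∀ y, r x y → y ∈ S := by
        intro x hx y hxy
        by_cases hyC : y ∈ C
        · exact Or.inl hyC
        · by_cases hyA : ∀ c ∈ C, ¬ r c y
          · exfalso
            rcases hx with hxC | ⟨hxC, hxA⟩
            · exact hyA x hxC hxy
            · exact hxA (hno x y hxC hyC hyA hxy)
          · exact Or.inr ⟨hyC, hyA⟩
      have hva1 : v ≠ a1 := fun h => ha1C (h ▸ (List.mem_cons_self (a := v) (l := l)))
      have := reach_closed hclosed (x := v) (y := a1)
        (Or.inl ((List.mem_cons_self (a := v) (l := l)))) (hsc v a1 hva1)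
      rcases this with h | ⟨_, h⟩
      · exact ha1C h
      · exact h ha1A
    obtain ⟨b0, a0, hb0C, ha0C, ha0A, hba, hb0B'⟩ := hedge
    have hb0B : ∀ c ∈ C, ¬ r b0 c := by
      rcases hAB b0 hb0C with hA | hB
      · exact absurd hA hb0B'
      · exact hB
    have hCb0 : ∀ c ∈ C, r c b0 := by
      intro c hcC
      rcases hsemi c b0 (fun h => hb0C (h ▸ hcC)) with h | h
      · exact h
      · exact absurd h (hb0B c hcC)
    have ha0C' : ∀ c ∈ C, r a0 c := by
      intro c hcC
      rcases hsemi a0 c (fun h => ha0C (h ▸ hcC)) with h | h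
      · exact h
      · exact absurd h (ha0A c hcC)
    have hab : b0 ≠ a0 := by
      intro h
      subst h
      exact hb0B' ha0A
    -- write l = l0 ++ [z]
    obtain ⟨l0, z, hlz⟩ := (List.eq_nil_or_concat l).resolve_left hl
    rw [List.concat_eq_append] at hlz
    subst hlz
    refine ⟨l0 ++ [b0, a0], ⟨?_, ?_⟩, by simp⟩
    · -- Nodup
      have hnd : (v :: l0).Nodup := by
        have := hc.1
        rw [show v :: (l0 ++ [z]) = (v :: l0) ++ [z] by simp] at this
        exact (List.nodup_append.1 this).1
      rw [show v :: (l0 ++ [b0, a0]) = (v :: l0) ++ [b0, a0] by simp, List.nodup_append]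
      refine ⟨hnd, by simp [hab], ?_⟩
      intro x hx
      have hxC : x ∈ C := by
        rcases List.mem_cons.1 hx with h | h
        · rw [h]; exact List.mem_cons_self
        · exact List.mem_cons.2 (Or.inr (by simp [h]))
      simp only [List.mem_cons, List.mem_singleton, List.not_mem_nil, or_false]
      rintro _ (rfl | rfl) rfl
      · exact hb0C hxC
      · exact ha0C hxC
    · -- Chain
      have hch := hc.2
      rw [show (l0 ++ [z]) ++ [v] = l0 ++ z :: [v] by simp, chain_split_iff] at hch
      have hch0 : List.Chain r v l0 := ((chain_concat l0).1 hch.1).1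
      rw [show (l0 ++ [b0, a0]) ++ [v] = l0 ++ b0 :: [a0, v] by simp, chain_split_iff]
      constructor
      · rw [chain_concat]
        refine ⟨hch0, ?_⟩
        apply hCb0
        have : (v :: l0).getLast (by simp) ∈ v :: l0 := List.getLast_mem _
        rcases List.mem_cons.1 this with h | h
        · rw [h]; exact (List.mem_cons_self (a := v))
        · exact List.mem_cons.2 (Or.inr (by simp [h]))
      · simp only [chain_cons_iff, List.Chain.nil, and_true]
        exact ⟨hba, ha0C' v ((List.mem_cons_self (a := v)))⟩

lemma base [Fintype V] (hsemi : SemiComplete r) (hsc : StronglyConnected r)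
    (hcard : 2 ≤ Fintype.card V) (u : V) :
    ∃ l : List V, IsCyc r u l ∧ l ≠ [] ∧ l.length ≤ 2 := by
  classical
  -- there is an out-neighbour distinct from u
  have hO : ∃ x, x ≠ u ∧ r u x := by
    by_contra hno
    push_neg at hno
    obtain ⟨y0, hy0⟩ := Fintype.exists_ne_of_one_lt_card (by omega) u
    have hclosed : ∀ x ∈ ({u} : Set V), ∀ y, r x y → y ∈ ({u} : Set V) := by
      intro x hx y hxy
      simp only [Set.mem_singleton_iff] at hx ⊢
      subst hx
      by_contra hyu
      exact hno y hyu hxy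
    have := reach_closed hclosed (x := u) (y := y0) rfl (hsc u y0 (Ne.symm hy0))
    exact hy0 this
  have hI : ∃ x, x ≠ u ∧ r x u := by
    by_contra hno
    push_neg at hno
    obtain ⟨y0, hy0⟩ := Fintype.exists_ne_of_one_lt_card (by omega) u
    have hclosed : ∀ x ∈ {x : V | x ≠ u}, ∀ y, r x y → y ∈ {x : V | x ≠ u} := by
      intro x hx y hxy
      simp only [Set.mem_setOf_eq] at hx ⊢
      rintro rfl
      exact hno x hx hxy
    have := reach_closed hclosed (x := y0) (y := u) hy0 (hsc y0 u hy0)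
    exact this rfl
  by_cases h2 : ∃ x, x ≠ u ∧ r u x ∧ r x u
  · obtain ⟨x, hxu, hux, hxu'⟩ := h2
    exact ⟨[x], ⟨by simp [hxu.symm], by simp [chain_cons_iff, List.Chain.nil, hux, hxu']⟩, by simp, by simp⟩
  · push_neg at h2
    by_cases h3 : ∃ x y, x ≠ u ∧ r u x ∧ y ≠ u ∧ r y u ∧ r x y
    · obtain ⟨x, y, hxu, hux, hyu, hyu', hxy⟩ := h3
      have hxy' : x ≠ y := by
        rintro rfl
        exact h2 x hxu hux hyu'
      exact ⟨[x, y], ⟨by simp [hxu.symm, hyu.symm, hxy'],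
        by simp [chain_cons_iff, List.Chain.nil, hux, hxy, hyu']⟩, by simp, by simp⟩
    · exfalso
      push_neg at h3
      obtain ⟨i, hiu, hiu'⟩ := hI
      set S : Set V := {x | ¬ (x ≠ u ∧ r x u)} with hS
      have hclosed : ∀ x ∈ S, ∀ y, r x y → y ∈ S := by
        intro x hx y hxy
        simp only [hS, Set.mem_setOf_eq, not_and] at hx ⊢
        intro hyu hyu'
        by_cases hxu : x = u
        · rw [hxu] at hxy
          exact h2 y hyu hxy hyu'
        · have hxu' : ¬ r x u := hx hxu
          have hux : r u x := by
            rcases hsemi u x (Ne.symm hxu) with h | h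
            · exact h
            · exact absurd h hxu'
          exact h3 x y hxu hux hyu hyu' hxy
      have huS : u ∈ S := by simp [hS]
      have := reach_closed hclosed huS (hsc u i (Ne.symm hiu))
      simp only [hS, Set.mem_setOf_eq, not_and] at this
      exact this hiu hiu'

lemma cyc_pred [Fintype V] [DecidableEq V] (hsemi : SemiComplete r)
    (hsc : StronglyConnected r) (hn : 4 ≤ Fintype.card V) (u : V) :
    ∃ l : List V, IsCyc r u l ∧ l.length + 2 = Fintype.card V := by
  have key : ∀ m : ℕ, ∀ l : List V, IsCyc r u l → l ≠ [] →
      l.length + 2 + m = Fintype.card V →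
      ∃ l' : List V, IsCyc r u l' ∧ l'.length + 2 = Fintype.card V := by
    intro m
    induction m with
    | zero => intro l hc _ hlen; exact ⟨l, hc, by omega⟩
    | succ m ih =>
      intro l hc hne hlen
      have hex : ∃ w, w ∉ u :: l := by
        by_contra hall
        push_neg at hall
        have hsub : Finset.univ ⊆ (u :: l).toFinset := fun x _ => List.mem_toFinset.2 (hall x)
        have := Finset.card_le_card hsub
        rw [Finset.card_univ, List.toFinset_card_of_nodup hc.1] at this
        simp only [List.length_cons] at this
        omega
      obtain ⟨l', hc', hlen'⟩ := grow hsemi hsc hc hne hex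
      exact ih l' hc' (by rw [← List.length_pos_iff]; omega) (by omega)
  obtain ⟨l0, hc0, hne0, hle0⟩ := base hsemi hsc (by omega) u
  have h1 : 1 ≤ l0.length := List.length_pos_iff.2 hne0
  exact key (Fintype.card V - 2 - l0.length) l0 hc0 hne0 (by omega)

lemma strong_of_spanning {W : Type*} {s : W → W → Prop} {v : W} {l : List W}
    (hc : IsCyc s v l) (hall : ∀ y : W, y ∈ v :: l) : StronglyConnected s := by
  intro i j hij
  obtain ⟨l', hc', hperm⟩ := rotate hc (hall i)
  have hj : j ∈ l' := by
    have := hperm.mem_iff.2 (hall j)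
    rcases List.mem_cons.1 this with rfl | h
    · exact absurd rfl hij.symm
    · exact h
  exact chain_reach hc'.2 j (by simp [hj])

lemma del_strong [DecidableEq V] {v w : V} {l : List V} (hc : IsCyc r v l)
    (hw : w ∉ v :: l) (hall : ∀ y : V, y ≠ w → y ∈ v :: l) :
    StronglyConnected (delGraph r w) := by
  have hvw : v ≠ w := fun h => hw (h ▸ (List.mem_cons_self (a := v) (l := l)))
  have hlw : ∀ x ∈ l, x ≠ w := fun x hx h => hw (h ▸ List.mem_cons.2 (Or.inr hx))
  set L : List {x : V // x ≠ w} := l.pmap (fun x h => ⟨x, h⟩) hlw with hL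
  have hmapL : L.map Subtype.val = l := by
    rw [hL, List.map_pmap]
    exact List.pmap_eq_map _ ▸ List.map_id l
  refine strong_of_spanning (s := delGraph r w) (v := ⟨v, hvw⟩) (l := L) ⟨?_, ?_⟩ ?_
  · have h1 : ((⟨v, hvw⟩ :: L).map Subtype.val).Nodup := by
      have : (⟨v, hvw⟩ :: L : List {x : V // x ≠ w}).map Subtype.val = v :: l := by
        simp [hmapL]
      rw [this]
      exact hc.1
    exact h1.of_map _
  · show List.Chain (fun a b : {x : V // x ≠ w} => r a.1 b.1) ⟨v, hvw⟩ (L ++ [⟨v, hvw⟩])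
    refine (chain_map_iff (Subtype.val : {x : V // x ≠ w} → V)).1 ?_
    have hmap : (L ++ [(⟨v, hvw⟩ : {x : V // x ≠ w})]).map Subtype.val = l ++ [v] := by
      simp [hmapL]
    rw [hmap]
    exact hc.2
  · intro y
    by_cases hy : y.val = v
    · exact List.mem_cons.2 (Or.inl (Subtype.ext hy))
    · have : y.val ∈ v :: l := hall y.val y.2
      rcases List.mem_cons.1 this with h | h
      · exact absurd h hy
      · refine List.mem_cons.2 (Or.inr ?_)
        rw [hL, List.mem_pmap]
        exact ⟨y.val, h, Subtype.ext rfl⟩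

lemma cover [Fintype V] [DecidableEq V] {v : V} {l : List V} (hnd : (v :: l).Nodup)
    (hlen : l.length + 2 = Fintype.card V) :
    ∃ w, w ∉ v :: l ∧ ∀ y : V, y ≠ w → y ∈ v :: l := by
  have hex : ∃ w, w ∉ v :: l := by
    by_contra hall
    push_neg at hall
    have hsub : Finset.univ ⊆ (v :: l).toFinset := fun x _ => List.mem_toFinset.2 (hall x)
    have := Finset.card_le_card hsub
    rw [Finset.card_univ, List.toFinset_card_of_nodup hnd] at this
    simp only [List.length_cons] at this
    omega
  obtain ⟨w, hw⟩ := hex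
  refine ⟨w, hw, ?_⟩
  have hsub : (v :: l).toFinset ⊆ Finset.univ.erase w := by
    intro x hx
    rw [List.mem_toFinset] at hx
    exact Finset.mem_erase.2 ⟨fun h => hw (h ▸ hx), Finset.mem_univ x⟩
  have hcards : (Finset.univ.erase w).card ≤ (v :: l).toFinset.card := by
    rw [Finset.card_erase_of_mem (Finset.mem_univ w), Finset.card_univ,
      List.toFinset_card_of_nodup hnd]
    simp only [List.length_cons]
    omega
  have heq := Finset.eq_of_subset_of_card_le hsub hcards
  intro y hy
  have : y ∈ Finset.univ.erase w := Finset.mem_erase.2 ⟨hy, Finset.mem_univ y⟩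
  rw [← heq, List.mem_toFinset] at this
  exact this

end TwoDel

/-- a strongly connected semi-complete digraph on `n ≥ 4` vertices has at least
two strongly connected vertex-deleted induced subgraphs on `n - 1` vertices. -/
theorem two_deletable_vertices_of_stronglyConnected_semiComplete {n : ℕ} (hn : 4 ≤ n)
    (r : Fin n → Fin n → Prop) (hsemi : SemiComplete r) (hsc : StronglyConnected r) :
    ∃ i j : Fin n, i ≠ j ∧ StronglyConnected (delGraph r i) ∧
      StronglyConnected (delGraph r j) := by
  classical
  have hcard : 4 ≤ Fintype.card (Fin n) := by simp [hn]
  have u0 : Fin n := ⟨0, by omega⟩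
  obtain ⟨l1, hc1, hlen1⟩ := TwoDel.cyc_pred hsemi hsc hcard u0
  obtain ⟨w1, hw1, hall1⟩ := TwoDel.cover hc1.1 hlen1
  have hs1 := TwoDel.del_strong hc1 hw1 hall1
  obtain ⟨l2, hc2, hlen2⟩ := TwoDel.cyc_pred hsemi hsc hcard w1
  obtain ⟨w2, hw2, hall2⟩ := TwoDel.cover hc2.1 hlen2
  have hs2 := TwoDel.del_strong hc2 hw2 hall2
  have hne : w1 ≠ w2 := fun h => hw2 (h ▸ (List.mem_cons_self (a := w1) (l := l2)))
  exact ⟨w1, w2, hne, hs1, hs2⟩
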